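/- Let G be a subgroup of the symmetric group of ℕ. A type of G is a pair T = ⟨F | x⟩ with F ⊆ ℕ finite and x ∉ F; its typeset σ(T) is the orbit of x under the pointwise stabilizer G_F, and its rank ρ(T) is the G-age of σ(T) (finite sets A with g[A] ⊆ σ(T) for some g ∈ G). Call T age indivisible if σ(T) is age indivisible for the G-age. Suppose G has two age indivisible types T and S, both with infinite typesets, such that ρ(T) \ ρ(S) ≠ ∅ and ρ(S) \ ρ(T) ≠ ∅. Then G is divisible: there exists a partition of ℕ into two parts such that no injection f : ℕ → ℕ whose restriction to every finite set agrees with some element of G has image contained in either part. -/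

import Mathlib

/-- The `G`-age of a set `S`: finite subsets that can be mapped into `S`
by some element of `G`. -/
def Gage (G : Subgroup (Equiv.Perm ℕ)) (S : Set ℕ) : Set (Finset ℕ) :=
  {A | ∃ g ∈ G, ∀ a ∈ A, g a ∈ S}

/-- `S` is age indivisible for `G`: for every partition of `S` into two parts,
one part has the same `G`-age as `S`. -/
def AgeIndivisibleSet (G : Subgroup (Equiv.Perm ℕ)) (S : Set ℕ) : Prop :=
  ∀ S₀ S₁ : Set ℕ, Disjoint S₀ S₁ → S₀ ∪ S₁ = S →
    Gage G S₀ = Gage G S ∨ Gage G S₁ = Gage G S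

/-- The typeset of the type `⟨F | x⟩`: the orbit of `x` under the pointwise
stabilizer of `F` in `G`. -/
def Typeset (G : Subgroup (Equiv.Perm ℕ)) (F : Finset ℕ) (x : ℕ) : Set ℕ :=
  {y | ∃ g ∈ G, (∀ a ∈ F, g a = a) ∧ g x = y}

namespace AgeDivAux

def NS (S : Finset ℕ) : ℕ := S.sum (fun a => 2 ^ a)

lemma lt_NS {a : ℕ} {S : Finset ℕ} (ha : a ∈ S) : a < NS S :=
  lt_of_lt_of_le (Nat.lt_two_pow_self (n := a)) (Finset.single_le_sum (fun i _ => Nat.zero_le _) ha)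

variable {G : Subgroup (Equiv.Perm ℕ)}

lemma gage_downward {S : Set ℕ} {A B : Finset ℕ} (hBA : B ⊆ A) (hA : A ∈ Gage G S) :
    B ∈ Gage G S := by
  obtain ⟨g, hg, hmap⟩ := hA
  exact ⟨g, hg, fun a ha => hmap a (hBA ha)⟩

lemma gage_of_subset {S : Set ℕ} {W : Finset ℕ} (h : ↑W ⊆ S) : W ∈ Gage G S :=
  ⟨1, G.one_mem, fun a ha => by simpa using h ha⟩

lemma gage_image_iff {S : Set ℕ} {g : Equiv.Perm ℕ} (hg : g ∈ G) {A : Finset ℕ} :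
    A.image ⇑g ∈ Gage G S ↔ A ∈ Gage G S := by
  constructor
  · rintro ⟨h, hh, hmap⟩
    refine ⟨h * g, G.mul_mem hh hg, fun a ha => ?_⟩
    simpa using hmap (g a) (Finset.mem_image_of_mem _ ha)
  · rintro ⟨h, hh, hmap⟩
    refine ⟨h * g⁻¹, G.mul_mem hh (G.inv_mem hg), ?_⟩
    rintro b hb
    obtain ⟨a, ha, rfl⟩ := Finset.mem_image.1 hb
    simpa using hmap a ha

lemma mem_typeset_self (F : Finset ℕ) (x : ℕ) : x ∈ Typeset G F x :=
  ⟨1, G.one_mem, fun a _ => rfl, rfl⟩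

def Proper (𝒢 : Set (Finset ℕ)) (k : ℕ) (W : Finset ℕ) (c : ℕ → ℕ) : Prop :=
  (∀ w ∈ W, c w < k) ∧ ∀ i : ℕ, W.filter (fun w => c w = i) ∈ 𝒢

lemma proper_mono {𝒢 : Set (Finset ℕ)} {k : ℕ}
    (hdown : ∀ {A B : Finset ℕ}, B ⊆ A → A ∈ 𝒢 → B ∈ 𝒢)
    {W' W : Finset ℕ} {c : ℕ → ℕ} (hW : W' ⊆ W) (h : Proper 𝒢 k W c) : Proper 𝒢 k W' c :=
  ⟨fun w hw => h.1 w (hW hw), fun i => hdown (Finset.filter_subset_filter _ hW) (h.2 i)⟩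

lemma proper_congr {𝒢 : Set (Finset ℕ)} {k : ℕ} {W : Finset ℕ} {c c' : ℕ → ℕ}
    (hcc : ∀ w ∈ W, c w = c' w) (h : Proper 𝒢 k W c) : Proper 𝒢 k W c' := by
  constructor
  · intro w hw; rw [← hcc w hw]; exact h.1 w hw
  · intro i
    have heq : W.filter (fun w => c' w = i) = W.filter (fun w => c w = i) := by
      apply Finset.filter_congr; intro w hw; simp [hcc w hw]
    rw [heq]; exact h.2 i

lemma koenig {𝒢 : Set (Finset ℕ)} (hdown : ∀ {A B : Finset ℕ}, B ⊆ A → A ∈ 𝒢 → B ∈ 𝒢)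
    (U : Set ℕ) (k : ℕ)
    (hcol : ∀ W : Finset ℕ, ↑W ⊆ U → ∃ c, Proper 𝒢 k W c) :
    ∃ c : ℕ → ℕ, ∀ W : Finset ℕ, ↑W ⊆ U → Proper 𝒢 k W c := by
  classical
  let Wn : ℕ → Finset ℕ := fun n => (Finset.range n).filter (· ∈ U)
  have hmemWn : ∀ {j n : ℕ}, j ∈ Wn n ↔ (j < n ∧ j ∈ U) := by
    intro j n; simp [Wn]
  have hWnU : ∀ n, ↑(Wn n) ⊆ U := fun n j hj => (hmemWn.1 hj).2
  have hWnmono : ∀ {m n : ℕ}, m ≤ n → Wn m ⊆ Wn n := by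
    intro m n hmn j hj
    have := hmemWn.1 hj
    exact hmemWn.2 ⟨lt_of_lt_of_le this.1 hmn, this.2⟩
  let Ext : (ℕ → ℕ) → ℕ → Prop := fun s n =>
    ∀ m, ∃ c, Proper 𝒢 k (Wn m) c ∧ ∀ j ∈ Wn n, c j = s j
  have ext0 : Ext (fun _ => 0) 0 := by
    intro m
    obtain ⟨c, hc⟩ := hcol (Wn m) (hWnU m)
    exact ⟨c, hc, by intro j hj; exact absurd (hmemWn.1 hj).1 (by omega)⟩
  have step : ∀ n s, Ext s n → ∃ v, Ext (Function.update s n v) (n + 1) := by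
    intro n s hs
    by_cases hnU : n ∈ U
    · by_contra hno
      push_neg at hno
      have hno' : ∀ v, ∃ m, ∀ c, Proper 𝒢 k (Wn m) c →
          ∃ j ∈ Wn (n+1), c j ≠ Function.update s n v j := by
        intro v
        have h1 := hno v
        simp only [Ext, not_forall] at h1
        obtain ⟨m, hm⟩ := h1
        refine ⟨m, fun c hc => ?_⟩
        by_contra hcon
        push_neg at hcon
        exact hm ⟨c, hc, hcon⟩
      choose mf hmf using hno'
      obtain ⟨c, hcP, hcA⟩ := hs (max ((Finset.range k).sup mf) (n+1))
      have hnW : n ∈ Wn (max ((Finset.range k).sup mf) (n+1)) :=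
        hmemWn.2 ⟨lt_of_lt_of_le (Nat.lt_succ_self n) (le_max_right _ _), hnU⟩
      have hvk : c n < k := hcP.1 n hnW
      have hle : mf (c n) ≤ max ((Finset.range k).sup mf) (n+1) :=
        le_trans (Finset.le_sup (Finset.mem_range.2 hvk)) (le_max_left _ _)
      obtain ⟨j, hj, hne⟩ := hmf (c n) c (proper_mono hdown (hWnmono hle) hcP)
      rcases eq_or_ne j n with rfl | hjn
      · exact hne (by rw [Function.update_self])
      · have hj' := hmemWn.1 hj
        have hjWn : j ∈ Wn n := hmemWn.2 ⟨by omega, hj'.2⟩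
        exact hne (by rw [Function.update_of_ne hjn]
                      exact hcA j hjWn)
    · refine ⟨s n, ?_⟩
      rw [Function.update_eq_self]
      intro m
      obtain ⟨c, hcP, hcA⟩ := hs m
      refine ⟨c, hcP, fun j hj => ?_⟩
      have hj' := hmemWn.1 hj
      have hjn : j ≠ n := fun h => hnU (h ▸ hj'.2)
      exact hcA j (hmemWn.2 ⟨by omega, hj'.2⟩)
  let T : ℕ → Type := fun n => {s : ℕ → ℕ // Ext s n}
  let Sq : ∀ n, T n := fun n => Nat.rec (⟨fun _ => 0, ext0⟩ : T 0)
    (fun n p => ⟨Function.update p.1 n (Classical.choose (step n p.1 p.2)),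
      Classical.choose_spec (step n p.1 p.2)⟩) n
  let c : ℕ → ℕ := fun n => (Sq (n+1)).1 n
  have hagree : ∀ n m, n < m → (Sq m).1 n = (Sq (n+1)).1 n := by
    intro n m
    induction m with
    | zero => omega
    | succ m ih =>
      intro h
      rcases Nat.lt_succ_iff_lt_or_eq.mp h with h' | h'
      · have hSq : (Sq (m+1)).1 = Function.update (Sq m).1 m
            (Classical.choose (step m (Sq m).1 (Sq m).2)) := rfl
        rw [hSq, Function.update_of_ne (by omega)]
        exact ih h'
      · subst h'; rfl
  refine ⟨c, ?_⟩
  intro W hWU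
  have hWsub : W ⊆ Wn (W.sup id + 1) := by
    intro w hw
    exact hmemWn.2 ⟨Nat.lt_succ_of_le (Finset.le_sup (f := id) hw), hWU hw⟩
  obtain ⟨c', hc', hagr⟩ := (Sq (W.sup id + 1)).2 (W.sup id + 1)
  have hproper : Proper 𝒢 k (Wn (W.sup id + 1)) c := by
    refine proper_congr (fun j hj => ?_) hc'
    have hjlt : j < W.sup id + 1 := (hmemWn.1 hj).1
    rw [hagr j hj]
    show (Sq (W.sup id + 1)).1 j = (Sq (j+1)).1 j
    exact hagree j (W.sup id + 1) hjlt
  exact proper_mono hdown hWsub hproper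

/-- The key blocking lemma: if every point of the typeset `⟨F|x⟩` is mapped by the
embedding `f` to a point admitting a "cheap anchor" for the type `⟨E|y⟩`
(an element of `G` sending `y` there with `E` mapped below `c0`), then we get a
contradiction with age-indivisibility and incomparability. -/
lemma block (G : Subgroup (Equiv.Perm ℕ)) (F : Finset ℕ) (x : ℕ) (E : Finset ℕ) (y : ℕ)
    (hUind : AgeIndivisibleSet G (Typeset G F x))
    (hA : ¬ Gage G (Typeset G F x) ⊆ Gage G (Typeset G E y))
    (f : ℕ → ℕ) (Hf : ∀ A : Finset ℕ, ∃ g ∈ G, ∀ a ∈ A, f a = g a)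
    (c0 : ℕ)
    (hanch : ∀ u ∈ Typeset G F x, ∃ g ∈ G, g y = f u ∧ ∀ a ∈ E, g a < c0) :
    False := by
  classical
  set U := Typeset G F x with hU
  set V := Typeset G E y with hV
  set 𝒢 := Gage G V with h𝒢
  have hdown : ∀ {A B : Finset ℕ}, B ⊆ A → A ∈ 𝒢 → B ∈ 𝒢 := fun h hA => gage_downward h hA
  obtain ⟨A, hAU, hAV⟩ := Set.not_subset.1 hA
  -- choose anchors
  have hanch' : ∀ u : ℕ, ∃ g : Equiv.Perm ℕ, u ∈ U →
      (g ∈ G ∧ g y = f u ∧ ∀ a ∈ E, g a < c0) := by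
    intro u
    by_cases h : u ∈ U
    · obtain ⟨g, hg1, hg2, hg3⟩ := hanch u h
      exact ⟨g, fun _ => ⟨hg1, hg2, hg3⟩⟩
    · exact ⟨1, fun h' => absurd h' h⟩
  choose gu hgu using hanch'
  -- the label of a point u ∈ U : the restriction of its anchor to E, valued in Fin c0
  let L := ({z // z ∈ E} → Fin c0)
  let M := Fintype.card L
  let enc : L ≃ Fin M := Fintype.equivFin L
  let labelF : ∀ u : ℕ, u ∈ U → L := fun u h a => ⟨gu u a.1, (hgu u h).2.2 a.1 a.2⟩
  let col : ℕ → ℕ := fun u => if h : u ∈ U then (enc (labelF u h)).1 else 0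
  -- every finite subset of U is M-colorable with classes in 𝒢
  have hcolor : ∀ W : Finset ℕ, ↑W ⊆ U → ∃ c, Proper 𝒢 M W c := by
    intro W hWU
    refine ⟨col, ?_, ?_⟩
    · intro w hw
      have hwU : w ∈ U := hWU hw
      simp only [col, dif_pos hwU]
      exact (enc (labelF w hwU)).2
    · intro i
      rcases Finset.eq_empty_or_nonempty (W.filter (fun w => col w = i)) with he | ⟨w₀, hw₀⟩
      · rw [he]; exact ⟨1, G.one_mem, by simp⟩
      · have hw₀W : w₀ ∈ W := (Finset.mem_filter.1 hw₀).1
        have hw₀c : col w₀ = i := (Finset.mem_filter.1 hw₀).2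
        have hw₀U : w₀ ∈ U := hWU hw₀W
        obtain ⟨gW, hgWG, hgWf⟩ := Hf W
        refine ⟨(gu w₀)⁻¹ * gW, G.mul_mem (G.inv_mem (hgu w₀ hw₀U).1) hgWG, ?_⟩
        intro w hw
        have hwW : w ∈ W := (Finset.mem_filter.1 hw).1
        have hwc : col w = i := (Finset.mem_filter.1 hw).2
        have hwU : w ∈ U := hWU hwW
        -- labels of w and w₀ agree
        have hlab : labelF w hwU = labelF w₀ hw₀U := by
          have h1 : (enc (labelF w hwU)).1 = (enc (labelF w₀ hw₀U)).1 := by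
            have e1 : col w = (enc (labelF w hwU)).1 := by simp only [col, dif_pos hwU]
            have e2 : col w₀ = (enc (labelF w₀ hw₀U)).1 := by simp only [col, dif_pos hw₀U]
            rw [← e1, ← e2, hwc, hw₀c]
          exact enc.injective (Fin.ext h1)
        have hagE : ∀ a ∈ E, gu w a = gu w₀ a := by
          intro a ha
          have := congrFun hlab ⟨a, ha⟩
          exact congrArg Fin.val this
        -- show the image point lies in V
        refine ⟨(gu w₀)⁻¹ * gu w, G.mul_mem (G.inv_mem (hgu w₀ hw₀U).1) (hgu w hwU).1, ?_, ?_⟩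
        · intro a ha
          simp only [Equiv.Perm.mul_apply]
          rw [hagE a ha]
          exact Equiv.symm_apply_apply _ _
        · simp only [Equiv.Perm.mul_apply]
          rw [(hgu w hwU).2.1, ← hgWf w hwW]
  -- main induction: no finite colorability bound is possible
  have main : ∀ k : ℕ, (∀ W : Finset ℕ, ↑W ⊆ U → ∃ c, Proper 𝒢 k W c) → False := by
    intro k
    induction k with
    | zero =>
      intro h
      obtain ⟨c, hb, _⟩ := h {x} (by simp [Set.singleton_subset_iff, hU, mem_typeset_self])
      exact absurd (hb x (Finset.mem_singleton_self x)) (by omega)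
    | succ k ih =>
      intro hcol
      obtain ⟨c, hproper⟩ := koenig hdown U (k+1) hcol
      -- split U into the class of color k and the rest
      have := hUind {n | n ∈ U ∧ c n = k} {n | n ∈ U ∧ c n ≠ k}
        (by rw [Set.disjoint_left]; rintro a ⟨_, h1⟩ ⟨_, h2⟩; exact h2 h1)
        (by ext a; constructor
            · rintro (⟨h, _⟩ | ⟨h, _⟩) <;> exact h
            · intro h; by_cases hc : c a = k
              · exact Or.inl ⟨h, hc⟩
              · exact Or.inr ⟨h, hc⟩)
      rcases this with h0 | h1
      · -- color-k class has full age: an A-copy inside it lies in one 𝒢-class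
        have hAin : A ∈ Gage G {n | n ∈ U ∧ c n = k} := by rw [h0]; exact hAU
        obtain ⟨g, hgG, hgmap⟩ := hAin
        have hWA : ↑(A.image ⇑g) ⊆ U := by
          intro b hb
          obtain ⟨a, ha, rfl⟩ := Finset.mem_image.1 (by exact_mod_cast hb)
          exact (hgmap a ha).1
        have hfilter : (A.image ⇑g).filter (fun w => c w = k) = A.image ⇑g := by
          apply Finset.filter_true_of_mem
          intro w hw
          obtain ⟨a, ha, rfl⟩ := Finset.mem_image.1 hw
          exact (hgmap a ha).2
        have : A.image ⇑g ∈ 𝒢 := by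
          rw [← hfilter]
          exact (hproper (A.image ⇑g) hWA).2 k
        exact hAV ((gage_image_iff hgG).1 this)
      · -- the rest has full age: colorability bound drops to k
        refine ih ?_
        intro W hWU
        have hWin : W ∈ Gage G {n | n ∈ U ∧ c n ≠ k} := by rw [h1]; exact gage_of_subset hWU
        obtain ⟨h, hhG, hhmap⟩ := hWin
        have hWimgU : ↑(W.image ⇑h) ⊆ U := by
          intro b hb
          obtain ⟨a, ha, rfl⟩ := Finset.mem_image.1 (by exact_mod_cast hb)
          exact (hhmap a ha).1
        refine ⟨fun w => c (h w), ?_, ?_⟩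
        · intro w hw
          show c (h w) < k
          have h1 : c (h w) < k + 1 :=
            (hproper (W.image ⇑h) hWimgU).1 (h w) (Finset.mem_image_of_mem _ hw)
          have h2 : c (h w) ≠ k := (hhmap w hw).2
          omega
        · intro i
          have himg : (W.filter (fun w => c (h w) = i)).image ⇑h
              = (W.image ⇑h).filter (fun z => c z = i) := by
            ext b
            simp only [Finset.mem_image, Finset.mem_filter]
            constructor
            · rintro ⟨a, ⟨ha1, ha2⟩, rfl⟩
              exact ⟨⟨a, ha1, rfl⟩, ha2⟩
            · rintro ⟨⟨a, ha, rfl⟩, hc⟩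
              exact ⟨a, ⟨ha, hc⟩, rfl⟩
          have : (W.filter (fun w => c (h w) = i)).image ⇑h ∈ 𝒢 := by
            rw [himg]
            exact (hproper (W.image ⇑h) hWimgU).2 i
          exact (gage_image_iff hhG).1 this
  exact main M hcolor

end AgeDivAux


theorem divisible_of_incomparable_types (G : Subgroup (Equiv.Perm ℕ))
    (F : Finset ℕ) (x : ℕ) (hx : x ∉ F)
    (E : Finset ℕ) (y : ℕ) (hy : y ∉ E)
    (hTinf : (Typeset G F x).Infinite) (hSinf : (Typeset G E y).Infinite)
    (hTind : AgeIndivisibleSet G (Typeset G F x))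
    (hSind : AgeIndivisibleSet G (Typeset G E y))
    (h₁ : ¬ Gage G (Typeset G F x) ⊆ Gage G (Typeset G E y))
    (h₂ : ¬ Gage G (Typeset G E y) ⊆ Gage G (Typeset G F x)) :
    ∃ P : Set ℕ, ∀ f : ℕ → ℕ, Function.Injective f →
      (∀ A : Finset ℕ, ∃ g ∈ G, ∀ a ∈ A, f a = g a) →
      ¬ Set.range f ⊆ P ∧ ¬ Set.range f ⊆ Pᶜ := by
  classical
  open AgeDivAux in
  refine ⟨{n | ∃ g ∈ G, g y = n ∧ ∀ h ∈ G, h x = n →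
      NS (E.image ⇑g) < NS (F.image ⇑h)}, ?_⟩
  intro f _hinj hf
  constructor
  · -- range f ⊆ P is impossible
    intro hr
    refine AgeDivAux.block G F x E y hTind h₁ f hf (NS (F.image f)) ?_
    intro u hu
    obtain ⟨gu', hgu'G, hfix, hgx⟩ := hu
    obtain ⟨gfin, hgfinG, hfin⟩ := hf (insert u F)
    have hstarG : gfin * gu' ∈ G := G.mul_mem hgfinG hgu'G
    have hstarx : (gfin * gu') x = f u := by
      simp only [Equiv.Perm.mul_apply, hgx]
      exact (hfin u (Finset.mem_insert_self u F)).symm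
    have himg : F.image ⇑(gfin * gu') = F.image f := by
      have h1 : F.image ⇑(gfin * gu') = (F.image ⇑gu').image ⇑gfin := by
        rw [Finset.image_image]; rfl
      have h2 : F.image ⇑gu' = F := by
        rw [Finset.image_congr (g := id) (fun a ha => hfix a ha), Finset.image_id]
      have h3 : F.image ⇑gfin = F.image f :=
        Finset.image_congr (fun a ha => (hfin a (Finset.mem_insert_of_mem ha)).symm)
      rw [h1, h2, h3]
    have hfuP := hr ⟨u, rfl⟩
    obtain ⟨g, hgG, hgy, hb⟩ := hfuP
    have hlt : NS (E.image ⇑g) < NS (F.image f) := by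
      rw [← himg]; exact hb (gfin * gu') hstarG hstarx
    refine ⟨g, hgG, hgy, fun a ha => ?_⟩
    exact lt_trans (AgeDivAux.lt_NS (Finset.mem_image_of_mem ⇑g ha)) hlt
  · -- range f ⊆ Pᶜ is impossible
    intro hr
    refine AgeDivAux.block G E y F x hSind h₂ f hf (NS (E.image f) + 1) ?_
    intro v hv
    obtain ⟨gv, hgvG, hfixE, hgy⟩ := hv
    obtain ⟨gfin, hgfinG, hfin⟩ := hf (insert v E)
    have hstarG : gfin * gv ∈ G := G.mul_mem hgfinG hgvG
    have hstary : (gfin * gv) y = f v := by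
      simp only [Equiv.Perm.mul_apply, hgy]
      exact (hfin v (Finset.mem_insert_self v E)).symm
    have himg : E.image ⇑(gfin * gv) = E.image f := by
      have h1 : E.image ⇑(gfin * gv) = (E.image ⇑gv).image ⇑gfin := by
        rw [Finset.image_image]; rfl
      have h2 : E.image ⇑gv = E := by
        rw [Finset.image_congr (g := id) (fun a ha => hfixE a ha), Finset.image_id]
      have h3 : E.image ⇑gfin = E.image f :=
        Finset.image_congr (fun a ha => (hfin a (Finset.mem_insert_of_mem ha)).symm)
      rw [h1, h2, h3]
    have hfvP : f v ∉ {n | ∃ g ∈ G, g y = n ∧ ∀ h ∈ G, h x = n →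
        NS (E.image ⇑g) < NS (F.image ⇑h)} := hr ⟨v, rfl⟩
    have key : ∃ h ∈ G, h x = f v ∧ NS (F.image ⇑h) ≤ NS (E.image f) := by
      by_contra hk
      push_neg at hk
      refine hfvP ⟨gfin * gv, hstarG, hstary, ?_⟩
      intro h hhG hhx
      rw [himg]
      exact hk h hhG hhx
    obtain ⟨h, hhG, hhx, hble⟩ := key
    refine ⟨h, hhG, hhx, fun b hb => ?_⟩
    have := AgeDivAux.lt_NS (Finset.mem_image_of_mem ⇑h hb)
    omega
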